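/- Under assumption A1 (wᵏ ∈ ℛ_{C,γₖ}^{Dₖ}(xᵏ, zᵏ) with γₖ = (1−ζₖ)/2, zᵏ = xᵏ − αₖDₖ⁻¹∇f(xᵏ)), the iterates x^{k+1} = xᵏ + τₖ(wᵏ − xᵏ) of the inexact SGP method satisfy, for every x ∈ C and every k: ‖x^{k+1} − x‖²_{Dₖ} ≤ ‖xᵏ − x‖²_{Dₖ} + 2αₖτₖ⟨∇f(xᵏ), x − xᵏ⟩ + ξ[f(xᵏ) − f(x^{k+1}) + νₖ], where ξ = 2α_max/σ. -/

import Mathlib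

open RealInnerProductSpace

abbrev EucSp (n : ℕ) := EuclideanSpace ℝ (Fin n)

noncomputable def dipr {n : ℕ} (D : Matrix (Fin n) (Fin n) ℝ) (x y : EucSp n) : ℝ :=
  ⟪(Matrix.toEuclideanLin D) x, y⟫

noncomputable def dnorm {n : ℕ} (D : Matrix (Fin n) (Fin n) ℝ) (x : EucSp n) : ℝ :=
  Real.sqrt (dipr D x x)

lemma dipr_sub_left {n : ℕ} (D : Matrix (Fin n) (Fin n) ℝ) (u v w : EucSp n) :
    dipr D (u - v) w = dipr D u w - dipr D v w := by
  simp [dipr, map_sub, inner_sub_left]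

lemma dipr_sub_right {n : ℕ} (D : Matrix (Fin n) (Fin n) ℝ) (u v w : EucSp n) :
    dipr D u (v - w) = dipr D u v - dipr D u w := by
  simp [dipr, inner_sub_right]

lemma dipr_add_left {n : ℕ} (D : Matrix (Fin n) (Fin n) ℝ) (u v w : EucSp n) :
    dipr D (u + v) w = dipr D u w + dipr D v w := by
  simp [dipr, map_add, inner_add_left]

lemma dipr_add_right {n : ℕ} (D : Matrix (Fin n) (Fin n) ℝ) (u v w : EucSp n) :
    dipr D u (v + w) = dipr D u v + dipr D u w := by
  simp [dipr, inner_add_right]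

lemma dipr_smul_left {n : ℕ} (D : Matrix (Fin n) (Fin n) ℝ) (a : ℝ) (u v : EucSp n) :
    dipr D (a • u) v = a * dipr D u v := by
  rw [dipr, dipr, map_smul, real_inner_smul_left]

lemma dipr_smul_right {n : ℕ} (D : Matrix (Fin n) (Fin n) ℝ) (a : ℝ) (u v : EucSp n) :
    dipr D u (a • v) = a * dipr D u v := by
  rw [dipr, dipr, real_inner_smul_right]

lemma dipr_neg_neg {n : ℕ} (D : Matrix (Fin n) (Fin n) ℝ) (u v : EucSp n) :
    dipr D (-u) (-v) = dipr D u v := by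
  simp [dipr, inner_neg_neg]

lemma dipr_symm {n : ℕ} {D : Matrix (Fin n) (Fin n) ℝ} (hD : D.IsHermitian) (u v : EucSp n) :
    dipr D u v = dipr D v u := by
  have hs := (Matrix.isHermitian_iff_isSymmetric).1 hD
  rw [dipr, dipr, hs u v, real_inner_comm]

lemma dipr_nonneg {n : ℕ} {D : Matrix (Fin n) (Fin n) ℝ} (hD : D.PosSemidef) (u : EucSp n) :
    0 ≤ dipr D u u := by
  have h := hD.re_dotProduct_nonneg (WithLp.equiv 2 _ u)
  simpa [dipr, PiLp.inner_apply, RCLike.inner_apply, Matrix.toEuclideanLin_apply,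
    dotProduct, mul_comm] using h

lemma dnorm_sq {n : ℕ} {D : Matrix (Fin n) (Fin n) ℝ} (hD : D.PosSemidef) (u : EucSp n) :
    dnorm D u ^ 2 = dipr D u u :=
  Real.sq_sqrt (dipr_nonneg hD u)

lemma dipr_inv {n : ℕ} {D : Matrix (Fin n) (Fin n) ℝ} (hD : D.PosDef) (v u : EucSp n) :
    dipr D ((Matrix.toEuclideanLin D⁻¹) v) u = ⟪v, u⟫ := by
  have hdet : IsUnit D.det := hD.det_pos.ne'.isUnit
  have h1 : Matrix.toEuclideanLin D ((Matrix.toEuclideanLin D⁻¹) v) = v := by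
    rw [Matrix.toEuclideanLin_apply D⁻¹, Matrix.toEuclideanLin_apply_piLp_toLp,
      Matrix.mulVec_mulVec, Matrix.mul_nonsing_inv _ hdet, Matrix.one_mulVec]
  rw [dipr, h1]

set_option maxHeartbeats 2000000 in
theorem stmt14 {n : ℕ} (C : Set (EucSp n)) (hcl : IsClosed C) (hconv : Convex ℝ C)
    (f : EucSp n → ℝ) (g : EucSp n → EucSp n) (hf : ∀ x, HasGradientAt f (g x) x)
    (μ σ ζmin αmin αmax : ℝ) (hμ : 1 ≤ μ) (hσ : 0 < σ ∧ σ < 1)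
    (hζmin : 0 < ζmin ∧ ζmin < 1) (hαmin : 0 < αmin) (hαord : αmin ≤ αmax)
    (Dm : ℕ → Matrix (Fin n) (Fin n) ℝ) (hpos : ∀ k, (Dm k).PosDef)
    (heig : ∀ k i, 1 / μ ≤ (hpos k).1.eigenvalues i ∧ (hpos k).1.eigenvalues i ≤ μ)
    (α ζ τ ν : ℕ → ℝ)
    (hα : ∀ k, αmin ≤ α k ∧ α k ≤ αmax) (hζ : ∀ k, ζmin < ζ k ∧ ζ k ≤ 1)
    (hτ : ∀ k, 0 < τ k ∧ τ k ≤ 1) (hν : ∀ k, 0 ≤ ν k)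
    (X w z : ℕ → EucSp n) (hXC : ∀ k, X k ∈ C)
    (hz : ∀ k, z k = X k - α k • (Matrix.toEuclideanLin (Dm k)⁻¹) (g (X k)))
    (hA1 : ∀ k, w k ∈ C ∧ ∀ y ∈ C,
      dipr (Dm k) (z k - w k) (y - w k) ≤ ((1 - ζ k) / 2) * (dnorm (Dm k) (w k - X k)) ^ 2)
    (hiter : ∀ k, X (k + 1) = X k + τ k • (w k - X k))
    (hls : ∀ k, f (X (k + 1)) ≤ f (X k) + σ * τ k * ⟪g (X k), w k - X k⟫ + ν k) :
    ∀ x ∈ C, ∀ k, (dnorm (Dm k) (X (k + 1) - x)) ^ 2 ≤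
      (dnorm (Dm k) (X k - x)) ^ 2 + 2 * α k * τ k * ⟪g (X k), x - X k⟫ +
        (2 * αmax / σ) * (f (X k) - f (X (k + 1)) + ν k) := by
  intro x hx k
  set D := Dm k with hD
  have hpsd : D.PosSemidef := (hpos k).posSemidef
  have hherm : D.IsHermitian := (hpos k).1
  set t := τ k with ht
  set a := α k with ha
  set P := dipr D (X k - x) (X k - x) with hP
  set Q := dipr D (w k - X k) (X k - x) with hQ
  set N := dipr D (w k - X k) (w k - X k) with hN
  set Gx := (⟪g (X k), x - X k⟫ : ℝ) with hGx
  set Gw := (⟪g (X k), w k - X k⟫ : ℝ) with hGw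
  have hNnn : 0 ≤ N := dipr_nonneg hpsd _
  -- expansion of the new distance
  have hX1 : X (k + 1) - x = (X k - x) + t • (w k - X k) := by
    rw [hiter k]; abel
  have F1 : dipr D (X (k + 1) - x) (X (k + 1) - x) = P + 2 * t * Q + t ^ 2 * N := by
    rw [hX1, dipr_add_left, dipr_add_right, dipr_add_right, dipr_smul_left, dipr_smul_left,
      dipr_smul_right, dipr_smul_right, dipr_symm hherm (X k - x) (w k - X k)]
    ring
  -- decomposition of dipr D (z k - w k) u
  have hzw : ∀ u : EucSp n, dipr D (z k - w k) u
      = dipr D (X k - w k) u - a * ⟪g (X k), u⟫ := by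
    intro u
    have h1 : z k - w k = (X k - w k) - a • (Matrix.toEuclideanLin (Dm k)⁻¹) (g (X k)) := by
      rw [hz k]; abel
    rw [h1, dipr_sub_left, dipr_smul_left, dipr_inv (hpos k)]
  -- fact from A1 with y = x
  have hAx := (hA1 k).2 x hx
  rw [dnorm_sq hpsd] at hAx
  have F2 : Q + N - a * (Gx - Gw) ≤ ((1 - ζ k) / 2) * N := by
    rw [hzw] at hAx
    have hxw : x - w k = (x - X k) + (X k - w k) := by abel
    rw [hxw, dipr_add_right, inner_add_right] at hAx
    have e1 : dipr D (X k - w k) (x - X k) = Q := by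
      rw [hQ, show X k - w k = -(w k - X k) by abel, show x - X k = -(X k - x) by abel,
        dipr_neg_neg]
    have e2 : dipr D (X k - w k) (X k - w k) = N := by
      rw [hN, show X k - w k = -(w k - X k) by abel, dipr_neg_neg]
    have e3 : (⟪g (X k), X k - w k⟫ : ℝ) = -Gw := by
      rw [hGw, show X k - w k = -(w k - X k) by abel, inner_neg_right]
    rw [e1, e2, e3] at hAx
    linarith [hAx]
  -- fact from A1 with y = X k
  have hAX := (hA1 k).2 (X k) (hXC k)
  rw [dnorm_sq hpsd, hzw] at hAX
  have F3 : N + a * Gw ≤ ((1 - ζ k) / 2) * N := by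
    have e2 : dipr D (X k - w k) (X k - w k) = N := by
      rw [hN, show X k - w k = -(w k - X k) by abel, dipr_neg_neg]
    have e3 : (⟪g (X k), X k - w k⟫ : ℝ) = -Gw := by
      rw [hGw, show X k - w k = -(w k - X k) by abel, inner_neg_right]
    rw [e2, e3] at hAX
    linarith [hAX]
  -- bounds on the parameters
  obtain ⟨hσ0, hσ1⟩ := hσ
  obtain ⟨ht0, ht1⟩ := hτ k
  have hζ0 : 0 < ζ k := lt_trans hζmin.1 (hζ k).1
  have hζ1 : ζ k ≤ 1 := (hζ k).2
  have ha0 : 0 < a := lt_of_lt_of_le hαmin (hα k).1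
  have hamax : a ≤ αmax := (hα k).2
  have hαmax0 : 0 < αmax := lt_of_lt_of_le hαmin hαord
  -- Gw ≤ 0
  have hGw0 : Gw ≤ 0 := by
    have h : a * Gw ≤ ((1 - ζ k) / 2 - 1) * N := by linarith
    have h2 : ((1 - ζ k) / 2 - 1) * N ≤ 0 := by nlinarith
    nlinarith
  -- line search bound
  have hls' := hls k
  have key3 : -(2 * t * a * Gw) ≤ (2 * αmax / σ) * (f (X k) - f (X (k + 1)) + ν k) := by
    have h1 : -(σ * t * Gw) ≤ f (X k) - f (X (k + 1)) + ν k := by linarith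
    have h2 : 0 ≤ -(t * Gw) := by nlinarith
    have h3 : -(2 * t * a * Gw) ≤ -(2 * t * αmax * Gw) := by nlinarith
    have h4 : -(2 * t * αmax * Gw) = (2 * αmax / σ) * (-(σ * t * Gw)) := by
      field_simp
    have h5 : (2 * αmax / σ) * (-(σ * t * Gw)) ≤
        (2 * αmax / σ) * (f (X k) - f (X (k + 1)) + ν k) := by
      apply mul_le_mul_of_nonneg_left h1
      positivity
    linarith
  -- combine
  have key1 : 2 * t * Q ≤ 2 * t * (((1 - ζ k) / 2 - 1) * N + a * Gx - a * Gw) := by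
    have : Q ≤ ((1 - ζ k) / 2 - 1) * N + a * Gx - a * Gw := by linarith
    nlinarith
  have htN : 0 ≤ t * N := mul_nonneg ht0.le hNnn
  have hfac : t - 1 - ζ k ≤ 0 := by linarith
  have key2 : 2 * t * (((1 - ζ k) / 2 - 1) * N) + t ^ 2 * N ≤ 0 := by
    nlinarith [mul_nonneg htN (neg_nonneg.mpr hfac)]
  rw [dnorm_sq hpsd, dnorm_sq hpsd, F1]
  linarith [key1, key2, key3]
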